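/- Let A be a bounded operator commuting with the unilateral shift M_z on the vector-valued Hardy space H²(E), and suppose A = B* M_z for some bounded operator B also commuting with M_z. Then there exist bounded operators F, F' on E such that A is the Toeplitz operator with symbol F* + F'z. -/

import Mathlib

set_option linter.unnecessarySimpa false

open ContinuousLinearMap

section Aux

variable {E : Type*} [NormedAddCommGroup E] [InnerProductSpace ℂ E]

/-- Evaluation at a coordinate, as a continuous linear map on `ℓ²(ℕ, E)`. -/
noncomputable def lpEvalCLM (n : ℕ) : lp (fun _ : ℕ => E) 2 →L[ℂ] E :=
  LinearMap.mkContinuous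
    { toFun := fun f => f n
      map_add' := fun f g => rfl
      map_smul' := fun c f => rfl }
    1 (fun f => by rw [one_mul]; exact lp.norm_apply_le_norm two_ne_zero f n)

/-- Embedding at a coordinate, as a continuous linear map into `ℓ²(ℕ, E)`. -/
noncomputable def lpSingleCLM (n : ℕ) : E →L[ℂ] lp (fun _ : ℕ => E) 2 :=
  LinearMap.mkContinuous
    { toFun := fun x => lp.single 2 n x
      map_add' := fun x y => by
        apply lp.ext
        funext j
        by_cases h : j = n
        · subst h
          rw [lp.coeFn_add]
          simp [lp.single_apply_self]
        · rw [lp.coeFn_add]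
          simp [lp.single_apply_ne _ _ _ h]
      map_smul' := fun c x => by simpa using lp.single_smul 2 n x c }
    1 (fun x => by
      simp only [one_mul, LinearMap.coe_mk, AddHom.coe_mk]
      exact le_of_eq (lp.norm_single (E := fun _ : ℕ => E) (p := 2) (by norm_num) n x))

end Aux

/-- Identify the vector-valued Hardy space `H²(E)` with `ℓ²(ℕ, E)` and let `S` be the
unilateral shift `M_z`.  If `A` commutes with `S` and `A = B* S` for some bounded operator
`B` also commuting with `S`, then there are bounded operators `F, F'` on `E` such that `A`
is the (analytic) Toeplitz operator with symbol `F* + F' z`, i.e.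
`(A f)₀ = F* f₀` and `(A f)ₙ₊₁ = F* fₙ₊₁ + F' fₙ`. -/
theorem commutant_shift_symbol {E : Type*} [NormedAddCommGroup E] [InnerProductSpace ℂ E]
    [CompleteSpace E]
    (S A B : lp (fun _ : ℕ => E) 2 →L[ℂ] lp (fun _ : ℕ => E) 2)
    (hS0 : ∀ f : lp (fun _ : ℕ => E) 2, (S f) 0 = 0)
    (hSs : ∀ (f : lp (fun _ : ℕ => E) 2) (n : ℕ), (S f) (n + 1) = f n)
    (hAS : A ∘L S = S ∘L A) (hBS : B ∘L S = S ∘L B)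
    (hA : A = adjoint B ∘L S) :
    ∃ F F' : E →L[ℂ] E,
      (∀ f : lp (fun _ : ℕ => E) 2, (A f) 0 = adjoint F (f 0)) ∧
      ∀ (f : lp (fun _ : ℕ => E) 2) (n : ℕ),
        (A f) (n + 1) = adjoint F (f (n + 1)) + F' (f n) := by
  classical
  -- the shift moves `single n` to `single (n+1)`
  have hsingle : ∀ (n : ℕ) (x : E), S (lp.single 2 n x) = lp.single 2 (n + 1) x := by
    intro n x
    apply lp.ext
    funext j
    match j with
    | 0 =>
      rw [hS0]
      exact (lp.single_apply_ne (E := fun _ : ℕ => E) 2 (n + 1) x (by omega)).symm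
    | (m + 1) =>
      rw [hSs]
      by_cases h : m = n
      · subst h
        rw [lp.single_apply_self (E := fun _ : ℕ => E), lp.single_apply_self (E := fun _ : ℕ => E)]
      · rw [lp.single_apply_ne (E := fun _ : ℕ => E) 2 n x h, lp.single_apply_ne (E := fun _ : ℕ => E) 2 (n + 1) x (by omega)]
  have hBcomm : ∀ (g : lp (fun _ : ℕ => E) 2), B (S g) = S (B g) :=
    fun g => DFunLike.congr_fun hBS g
  have hAcomm : ∀ (g : lp (fun _ : ℕ => E) 2), A (S g) = S (A g) :=
    fun g => DFunLike.congr_fun hAS g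
  -- entries of `B` on `single`
  have hB0 : ∀ (n : ℕ) (y : E), (B (lp.single 2 (n + 1) y)) 0 = 0 := by
    intro n y
    rw [← hsingle, hBcomm, hS0]
  have hB1 : ∀ (n : ℕ) (y : E), (B (lp.single 2 (n + 1 + 1) y)) 1 = 0 := by
    intro n y
    rw [← hsingle, hBcomm]
    have := hSs (B (lp.single 2 (n + 1) y)) 0
    rw [this, hB0]
  -- entries of `A` on `single 0` vanish from degree 2 on
  have hA2 : ∀ (x : E) (m : ℕ), (A (lp.single 2 0 x)) (m + 1 + 1) = 0 := by
    intro x m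
    refine ext_inner_right ℂ fun y => ?_
    have h1 : (inner ℂ ((A (lp.single 2 0 x)) (m + 1 + 1)) y : ℂ)
        = inner ℂ (A (lp.single 2 0 x)) (lp.single 2 (m + 1 + 1) y) :=
      (lp.inner_single_right _ _ _).symm
    rw [h1, hA, ContinuousLinearMap.comp_apply, hsingle 0 x, adjoint_inner_left,
      lp.inner_single_left, hB1]
    simp
  -- shifting the argument of `A`
  have hAshift : ∀ (k : ℕ) (x : E),
      A (lp.single 2 (k + 1) x) = S (A (lp.single 2 k x)) := by
    intro k x
    rw [← hsingle, hAcomm]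
  -- general entry formula
  have hAk : ∀ (k : ℕ) (x : E) (m : ℕ),
      (A (lp.single 2 k x)) m
        = if h : k ≤ m then (A (lp.single 2 0 x)) (m - k) else 0 := by
    intro k
    induction k with
    | zero => intro x m; simp
    | succ k ih =>
      intro x m
      rw [hAshift]
      match m with
      | 0 =>
        rw [hS0, dif_neg (by omega)]
      | (j + 1) =>
        rw [hSs, ih]
        by_cases h : k ≤ j
        · rw [dif_pos h, dif_pos (Nat.succ_le_succ h),
            show j + 1 - (k + 1) = j - k from by omega]
        · rw [dif_neg h, dif_neg (by omega)]
  -- the two diagonal operators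
  obtain ⟨T0, hT0⟩ : ∃ T0 : E →L[ℂ] E, ∀ x : E, T0 x = (A (lp.single 2 0 x)) 0 :=
    ⟨lpEvalCLM 0 ∘L A ∘L lpSingleCLM 0, fun x => rfl⟩
  obtain ⟨T1, hT1⟩ : ∃ T1 : E →L[ℂ] E, ∀ x : E, T1 x = (A (lp.single 2 0 x)) 1 :=
    ⟨lpEvalCLM 1 ∘L A ∘L lpSingleCLM 0, fun x => rfl⟩
  -- summation of the entries
  have key : ∀ (f : lp (fun _ : ℕ => E) 2) (n : ℕ),
      HasSum (fun k => (A (lp.single 2 k (f k))) n) ((A f) n) := by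
    intro f n
    have h1 : HasSum (fun k : ℕ => lp.single 2 k (f k)) f :=
      lp.hasSum_single ENNReal.ofNat_ne_top f
    exact (h1.mapL A).mapL (lpEvalCLM n)
  refine ⟨adjoint T0, T1, ?_, ?_⟩
  · intro f
    rw [adjoint_adjoint]
    have hzero : ∀ k ∉ ({0} : Finset ℕ), (A (lp.single 2 k (f k))) 0 = 0 := by
      intro k hk
      obtain ⟨j, rfl⟩ : ∃ j, k = j + 1 := by
        refine ⟨k - 1, ?_⟩
        simp only [Finset.mem_singleton] at hk
        omega
      rw [hAk, dif_neg (by omega)]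
    have hs : (A f) 0 = ∑ k ∈ ({0} : Finset ℕ), (A (lp.single 2 k (f k))) 0 :=
      (key f 0).unique (hasSum_sum_of_ne_finset_zero hzero)
    rw [hs, Finset.sum_singleton]
    exact (hT0 _).symm
  · intro f n
    rw [adjoint_adjoint]
    have hzero : ∀ k ∉ ({n, n + 1} : Finset ℕ), (A (lp.single 2 k (f k))) (n + 1) = 0 := by
      intro k hk
      simp only [Finset.mem_insert, Finset.mem_singleton] at hk
      push_neg at hk
      by_cases h : k ≤ n + 1
      · rw [hAk, dif_pos h]
        obtain ⟨m, hm⟩ : ∃ m, n + 1 - k = m + 1 + 1 := ⟨n - 1 - k, by omega⟩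
        rw [hm, hA2]
      · rw [hAk, dif_neg h]
    have hs : (A f) (n + 1)
        = ∑ k ∈ ({n, n + 1} : Finset ℕ), (A (lp.single 2 k (f k))) (n + 1) :=
      (key f (n + 1)).unique (hasSum_sum_of_ne_finset_zero hzero)
    have e1 : (A (lp.single 2 n (f n))) (n + 1) = T1 (f n) := by
      rw [hAk, dif_pos (by omega), show n + 1 - n = 1 from by omega]
      exact (hT1 _).symm
    have e2 : (A (lp.single 2 (n + 1) (f (n + 1)))) (n + 1) = T0 (f (n + 1)) := by
      rw [hAk, dif_pos le_rfl, Nat.sub_self]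
      exact (hT0 _).symm
    rw [hs, Finset.sum_pair (show n ≠ n + 1 by omega), e1, e2]
    exact add_comm _ _
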